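/- For any region ℛ ⊆ 𝕊, the set Φ(ℛ) of all full specifications of ℛ is a partition of Ω: distinct full specifications of ℛ are disjoint, and every point of Ω belongs to some full specification of ℛ. -/
import Mathlib


open Set MeasureTheory

/-- A full specification of a region `R ⊆ 𝕊`: a nonempty event `F` with `dom F ⊆ R`
that decides every event decidable within `R`. -/
def IsFullSpec {Ω S : Type*} [MeasurableSpace Ω] (dom : Set Ω → Set S)
    (R : Set S) (F : Set Ω) : Prop :=
  MeasurableSet F ∧ F.Nonempty ∧ dom F ⊆ R ∧
    ∀ X : Set Ω, MeasurableSet X → dom X ⊆ R → F ⊆ X ∨ F ⊆ Xᶜ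

/-- The restriction `Γ_R(A)` of an event `A` to a region `R`: the intersection of all
events `Z` with `A ⊆ Z` and `dom Z ⊆ R`. -/
def restr {Ω S : Type*} [MeasurableSpace Ω] (dom : Set Ω → Set S)
    (R : Set S) (A : Set Ω) : Set Ω :=
  ⋂₀ {Z : Set Ω | MeasurableSet Z ∧ A ⊆ Z ∧ dom Z ⊆ R}

/-- Lemma 3: for any region `R`, the set `Φ(R)` of full specifications of `R` is a
partition of `Ω`: distinct full specifications are disjoint, and every point of `Ω`
belongs to some full specification of `R`.  It is assumed that `dom` satisfies
property (iii), that singletons are events, and that restrictions of events are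
events decidable in the restricting region. -/
theorem stmt7 {Ω S : Type*} [MeasurableSpace Ω] (dom : Set Ω → Set S)
    (prop_iii : ∀ X : Set Ω, MeasurableSet X → dom Xᶜ = dom X)
    (hsing : ∀ ω : Ω, MeasurableSet ({ω} : Set Ω))
    (hres : ∀ A : Set Ω, MeasurableSet A → ∀ R : Set S,
      MeasurableSet (restr dom R A) ∧ dom (restr dom R A) ⊆ R)
    (R : Set S) :
    (∀ F G : Set Ω, IsFullSpec dom R F → IsFullSpec dom R G → F ≠ G → F ∩ G = ∅) ∧
      (∀ ω : Ω, ∃ F : Set Ω, IsFullSpec dom R F ∧ ω ∈ F) := by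
  constructor
  · rintro F G ⟨_, _, _, hF⟩ ⟨hGm, _, hGd, hG⟩ hne
    by_contra h
    obtain ⟨ω, hωF, hωG⟩ := Set.nonempty_iff_ne_empty.mpr h
    rcases hF G hGm hGd with hFG | hFG
    swap
    · exact hFG hωF hωG
    rcases hG F ‹MeasurableSet F› ‹dom F ⊆ R› with hGF | hGF
    swap
    · exact hGF hωG hωF
    exact hne (Set.Subset.antisymm hFG hGF)
  · intro ω
    refine ⟨restr dom R {ω}, ⟨(hres {ω} (hsing ω) R).1, ⟨ω, ?_⟩,
      (hres {ω} (hsing ω) R).2, ?_⟩, ?_⟩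
    · exact Set.mem_sInter.mpr fun Z hZ => hZ.2.1 rfl
    · intro X hX hXd
      by_cases hωX : ω ∈ X
      · left
        intro z hz
        exact Set.mem_sInter.mp hz X ⟨hX, Set.singleton_subset_iff.mpr hωX, hXd⟩
      · right
        intro z hz
        exact Set.mem_sInter.mp hz Xᶜ ⟨hX.compl, Set.singleton_subset_iff.mpr hωX,
          (prop_iii X hX) ▸ hXd⟩
    · exact Set.mem_sInter.mpr fun Z hZ => hZ.2.1 rfl
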